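/- arXiv:math/0703298 — 9 statements merged into one kernel-verified Lean document; each statement's English description precedes it below -/
import Mathlib

section
/- For every subspace Δ ⊆ V and every alternating bilinear form ε on Δ, the subspace L(Δ,ε) ⊆ W is maximal isotropic (it is isotropic and dim L(Δ,ε) = m); moreover L(Δ,ε) ∩ ({0} ⊕ V*) = {0} ⊕ Ann(Δ) and π_V(L(Δ,ε)) = Δ, so L(Δ,ε) is an extension of Δ by Ann(Δ). -/
open Module

/-- The canonical symmetric bilinear form on `W = V ⊕ V*`:
`⟨X+ξ, Y+η⟩ = (1/2)(ξ(Y) + η(X))`. -/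
noncomputable def pairB (V : Type*) [AddCommGroup V] [Module ℝ V] :
    LinearMap.BilinForm ℝ (V × Module.Dual ℝ V) :=
  LinearMap.mk₂ ℝ (fun x y => (1/2) * (x.2 y.1 + y.2 x.1))
    (fun x y z => by simp; ring)
    (fun c x y => by simp; ring)
    (fun x y z => by simp; ring)
    (fun c x y => by simp; ring)

/-- The maximal isotropic `L(Δ,ε) = {X + ξ : X ∈ Δ, ξ|_Δ = ε(X,·)}` determined by a
subspace `Δ ⊆ V` and a bilinear form `ε` on `Δ`. -/
noncomputable def LDE {V : Type*} [AddCommGroup V] [Module ℝ V]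
    (Δ : Submodule ℝ V) (ε : Δ →ₗ[ℝ] Δ →ₗ[ℝ] ℝ) :
    Submodule ℝ (V × Module.Dual ℝ V) where
  carrier := {w | ∃ h : w.1 ∈ Δ, ∀ Y : Δ, w.2 Y = ε ⟨w.1, h⟩ Y}
  zero_mem' := ⟨Δ.zero_mem, fun Y => by
    have h0 : (⟨(0 : V × Module.Dual ℝ V).1, Δ.zero_mem⟩ : Δ) = 0 := rfl
    rw [h0]; simp⟩
  add_mem' := by
    rintro a b ⟨ha, hα⟩ ⟨hb, hβ⟩
    refine ⟨Δ.add_mem ha hb, fun Y => ?_⟩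
    have h1 : (⟨(a + b).1, Δ.add_mem ha hb⟩ : Δ) = ⟨a.1, ha⟩ + ⟨b.1, hb⟩ := rfl
    rw [h1]
    simp only [map_add, LinearMap.add_apply, Prod.snd_add]
    rw [hα Y, hβ Y]
  smul_mem' := by
    rintro c a ⟨ha, hα⟩
    refine ⟨Δ.smul_mem c ha, fun Y => ?_⟩
    have h1 : (⟨(c • a).1, Δ.smul_mem c ha⟩ : Δ) = c • (⟨a.1, ha⟩ : Δ) := rfl
    rw [h1]
    simp only [map_smul, LinearMap.smul_apply, Prod.smul_snd, smul_eq_mul]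
    rw [hα Y]

open Module
lemma aux {V W : Type*} [AddCommGroup V] [Module ℝ V] [FiniteDimensional ℝ V]
    [AddCommGroup W] [Module ℝ W] [FiniteDimensional ℝ W]
    (p : Submodule ℝ (V × W)) (Δ : Submodule ℝ V) (q : Submodule ℝ W)
    (h3 : p ⊓ (⊥ : Submodule ℝ V).prod (⊤ : Submodule ℝ W) = (⊥ : Submodule ℝ V).prod q)
    (h4 : Submodule.map (LinearMap.fst ℝ V W) p = Δ) :
    finrank ℝ p = finrank ℝ Δ + finrank ℝ q := by
  set f := (LinearMap.fst ℝ V W).comp p.subtype with hf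
  have hrange : LinearMap.range f = Δ := by
    rw [hf, LinearMap.range_comp, Submodule.range_subtype, h4]
  have hkerfst : LinearMap.ker (LinearMap.fst ℝ V W) = (⊥ : Submodule ℝ V).prod ⊤ := by
    ext ⟨a, b⟩; simp [LinearMap.mem_ker]
  have hker : LinearMap.ker f = Submodule.comap p.subtype ((⊥ : Submodule ℝ V).prod ⊤) := by
    rw [hf, LinearMap.ker_comp, hkerfst]
  have hkerrank : finrank ℝ (LinearMap.ker f) = finrank ℝ q := by
    rw [hker]
    have e1 : finrank ℝ (Submodule.comap p.subtype ((⊥ : Submodule ℝ V).prod ⊤))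
        = finrank ℝ (Submodule.map p.subtype
            (Submodule.comap p.subtype ((⊥ : Submodule ℝ V).prod ⊤))) :=
      (p.equivSubtypeMap (Submodule.comap p.subtype ((⊥ : Submodule ℝ V).prod ⊤))).finrank_eq
    rw [e1, Submodule.map_comap_subtype, h3]
    have einj : Function.Injective (LinearMap.inr ℝ V W) := fun a b h => by
      simpa using congrArg Prod.snd h
    have e2 : finrank ℝ q = finrank ℝ (Submodule.map (LinearMap.inr ℝ V W) q) :=
      LinearEquiv.finrank_eq (Submodule.equivMapOfInjective (LinearMap.inr ℝ V W) einj q)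
    rw [← Submodule.map_inr]; exact e2.symm
  have hrn : finrank ℝ (LinearMap.range f) + finrank ℝ (LinearMap.ker f) = finrank ℝ p :=
    LinearMap.finrank_range_add_finrank_ker f
  rw [hrange, hkerrank] at hrn
  omega

/-- For every subspace `Δ ⊆ V` and alternating bilinear form `ε` on `Δ`, the subspace
`L(Δ,ε)` is maximal isotropic, with `L(Δ,ε) ∩ ({0} ⊕ V*) = {0} ⊕ Ann(Δ)` and
`π_V(L(Δ,ε)) = Δ`. -/
theorem LDE_maximal_isotropic
    {V : Type*} [AddCommGroup V] [Module ℝ V] [FiniteDimensional ℝ V]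
    (Δ : Submodule ℝ V) (ε : Δ →ₗ[ℝ] Δ →ₗ[ℝ] ℝ) (halt : ∀ X : Δ, ε X X = 0) :
    (∀ x ∈ LDE Δ ε, ∀ y ∈ LDE Δ ε, pairB V x y = 0) ∧
    Module.finrank ℝ (LDE Δ ε) = Module.finrank ℝ V ∧
    LDE Δ ε ⊓ (⊥ : Submodule ℝ V).prod (⊤ : Submodule ℝ (Module.Dual ℝ V))
      = (⊥ : Submodule ℝ V).prod Δ.dualAnnihilator ∧
    Submodule.map (LinearMap.fst ℝ V (Module.Dual ℝ V)) (LDE Δ ε) = Δ := by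
  have hskew : ∀ X Y : Δ, ε X Y + ε Y X = 0 := by
    intro X Y
    have h := halt (X + Y)
    simp only [map_add, LinearMap.add_apply, halt X, halt Y] at h
    linarith
  have memL : ∀ w : V × Module.Dual ℝ V,
      w ∈ LDE Δ ε ↔ ∃ h : w.1 ∈ Δ, ∀ Y : Δ, w.2 Y = ε ⟨w.1, h⟩ Y := fun _ => Iff.rfl
  -- part 1: isotropy
  have h1 : ∀ x ∈ LDE Δ ε, ∀ y ∈ LDE Δ ε, pairB V x y = 0 := by
    rintro x ⟨hx, hξ⟩ y ⟨hy, hη⟩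
    have e1 : x.2 y.1 = ε ⟨x.1, hx⟩ ⟨y.1, hy⟩ := hξ ⟨y.1, hy⟩
    have e2 : y.2 x.1 = ε ⟨y.1, hy⟩ ⟨x.1, hx⟩ := hη ⟨x.1, hx⟩
    have hs := hskew ⟨x.1, hx⟩ ⟨y.1, hy⟩
    simp only [pairB, LinearMap.mk₂_apply, e1, e2]
    linarith
  -- part 4: projection is Δ
  have h4 : Submodule.map (LinearMap.fst ℝ V (Module.Dual ℝ V)) (LDE Δ ε) = Δ := by
    ext x
    simp only [Submodule.mem_map]
    constructor
    · rintro ⟨w, ⟨hw, -⟩, rfl⟩; exact hw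
    · intro hx
      obtain ⟨g, hg⟩ := LinearMap.exists_extend (ε ⟨x, hx⟩)
      exact ⟨(x, g), ⟨hx, fun Y => congrArg (fun f => f Y) hg⟩, rfl⟩
  -- part 3: intersection with 0 ⊕ V*
  have h3 : LDE Δ ε ⊓ (⊥ : Submodule ℝ V).prod (⊤ : Submodule ℝ (Module.Dual ℝ V))
      = (⊥ : Submodule ℝ V).prod Δ.dualAnnihilator := by
    ext w
    simp only [Submodule.mem_inf, Submodule.mem_prod, Submodule.mem_bot, Submodule.mem_top,
      and_true, Submodule.mem_dualAnnihilator, memL]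
    constructor
    · rintro ⟨⟨h, hw⟩, h0⟩
      refine ⟨h0, fun y hy => ?_⟩
      have e : (⟨w.1, h⟩ : Δ) = 0 := Subtype.ext h0
      rw [hw ⟨y, hy⟩, e, map_zero, LinearMap.zero_apply]
    · rintro ⟨h0, hann⟩
      have hw1 : w.1 ∈ Δ := by rw [h0]; exact Δ.zero_mem
      refine ⟨⟨hw1, fun Y => ?_⟩, h0⟩
      have e : (⟨w.1, hw1⟩ : Δ) = 0 := Subtype.ext h0
      rw [e, map_zero, LinearMap.zero_apply]
      exact hann Y Y.2
  -- part 2: dimension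
  have h2 : Module.finrank ℝ (LDE Δ ε) = Module.finrank ℝ V := by
    have hx := aux (LDE Δ ε) Δ Δ.dualAnnihilator h3 h4
    have hq : Module.finrank ℝ (V ⧸ Δ) = Module.finrank ℝ Δ.dualAnnihilator :=
      (Subspace.quotEquivAnnihilator Δ).finrank_eq
    have hqa := Submodule.finrank_quotient_add_finrank Δ
    omega
  exact ⟨h1, h2, h3, h4⟩
end

section
/- Every maximal isotropic subspace L ⊆ W is of the form L(Δ,ε): setting Δ = π_V(L), there exists a unique alternating bilinear form ε on Δ such that L = L(Δ,ε). -/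
open Module

lemma LDE_finrank_le {V : Type*} [AddCommGroup V] [Module ℝ V] [FiniteDimensional ℝ V]
    (Δ : Submodule ℝ V) (ε : Δ →ₗ[ℝ] Δ →ₗ[ℝ] ℝ) :
    Module.finrank ℝ (LDE Δ ε) ≤ Module.finrank ℝ V := by
  classical
  obtain ⟨r, hr⟩ := Δ.subtype.exists_leftInverse_of_injective Δ.ker_subtype
  have hrY : ∀ Y : Δ, r (Y : V) = Y := fun Y => congrArg (fun f => f Y) hr
  let A : (LDE Δ ε) →ₗ[ℝ] Δ :=
    ((LinearMap.fst ℝ V (Module.Dual ℝ V)).comp (LDE Δ ε).subtype).codRestrict Δ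
      (fun w => w.2.choose)
  have hA : ∀ w : LDE Δ ε, (A w : V) = (w : V × Module.Dual ℝ V).1 := fun w => rfl
  let B : Δ →ₗ[ℝ] Module.Dual ℝ V := (LinearMap.lcomp ℝ ℝ r).comp ε
  have hB : ∀ (δ : Δ) (v : V), B δ v = ε δ (r v) := fun δ v => rfl
  let C : (LDE Δ ε) →ₗ[ℝ] Module.Dual ℝ V :=
    (LinearMap.snd ℝ V (Module.Dual ℝ V)).comp (LDE Δ ε).subtype - B.comp A
  have hC : ∀ w : LDE Δ ε, C w ∈ Δ.dualAnnihilator := by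
    intro w
    rw [Submodule.mem_dualAnnihilator]
    intro y hy
    obtain ⟨h, hval⟩ := w.2
    have e1 : C w y = (w : V × Module.Dual ℝ V).2 y - ε (A w) (r y) := rfl
    have e2 : A w = ⟨(w : V × Module.Dual ℝ V).1, h⟩ := Subtype.ext rfl
    have e3 : r y = ⟨y, hy⟩ := hrY ⟨y, hy⟩
    rw [e1, e2, e3, ← hval ⟨y, hy⟩]
    simp
  let Φ : (LDE Δ ε) →ₗ[ℝ] Δ × (Δ.dualAnnihilator : Submodule ℝ (Module.Dual ℝ V)) :=
    A.prod (C.codRestrict _ hC)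
  have hΦ : Function.Injective Φ := by
    intro a b hab
    have h1 : A a = A b := congrArg Prod.fst hab
    have h2 : C a = C b := congrArg Subtype.val (congrArg Prod.snd hab)
    have h1' : (a : V × Module.Dual ℝ V).1 = (b : V × Module.Dual ℝ V).1 :=
      congrArg Subtype.val h1
    have h2' : (a : V × Module.Dual ℝ V).2 = (b : V × Module.Dual ℝ V).2 := by
      have ea : C a = (a : V × Module.Dual ℝ V).2 - B (A a) := rfl
      have eb : C b = (b : V × Module.Dual ℝ V).2 - B (A b) := rfl
      have := h2
      rw [ea, eb, h1] at this
      exact sub_left_injective this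
    exact Subtype.ext (Prod.ext h1' h2')
  have hle : Module.finrank ℝ (LDE Δ ε)
      ≤ Module.finrank ℝ (Δ × (Δ.dualAnnihilator : Submodule ℝ (Module.Dual ℝ V))) :=
    LinearMap.finrank_le_finrank_of_injective hΦ
  haveI : Module.Free ℝ (Δ.dualAnnihilator : Submodule ℝ (Module.Dual ℝ V)) :=
    Module.Free.of_divisionRing ℝ (Δ.dualAnnihilator : Submodule ℝ (Module.Dual ℝ V))
  haveI : Module.Free ℝ Δ := Module.Free.of_divisionRing ℝ Δ
  rw [Module.finrank_prod] at hle
  have e3 : Module.finrank ℝ Δ + Module.finrank ℝ Δ.dualAnnihilator = Module.finrank ℝ V := by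
    have h := LinearEquiv.finrank_eq (R := ℝ) (M := V ⧸ Δ)
      (N := (Δ.dualAnnihilator : Submodule ℝ (Module.Dual ℝ V)))
      (Subspace.quotEquivAnnihilator Δ)
    rw [← h]
    have h2 := Submodule.finrank_quotient_add_finrank (R := ℝ) (M := V) Δ
    omega
  omega

/-- Every maximal isotropic subspace `L ⊆ W` is of the form `L(Δ,ε)` for `Δ = π_V(L)` and
a unique alternating bilinear form `ε` on `Δ`. -/
theorem maximal_isotropic_eq_LDE
    {V : Type*} [AddCommGroup V] [Module ℝ V] [FiniteDimensional ℝ V]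
    (L : Submodule ℝ (V × Module.Dual ℝ V))
    (hiso : ∀ x ∈ L, ∀ y ∈ L, pairB V x y = 0)
    (hdim : Module.finrank ℝ L = Module.finrank ℝ V) :
    ∃! ε : (Submodule.map (LinearMap.fst ℝ V (Module.Dual ℝ V)) L) →ₗ[ℝ]
           (Submodule.map (LinearMap.fst ℝ V (Module.Dual ℝ V)) L) →ₗ[ℝ] ℝ,
      (∀ X, ε X X = 0) ∧
      L = LDE (Submodule.map (LinearMap.fst ℝ V (Module.Dual ℝ V)) L) ε := by
  classical
  set Δ := Submodule.map (LinearMap.fst ℝ V (Module.Dual ℝ V)) L with hΔ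
  have hpair : ∀ x y : V × Module.Dual ℝ V,
      pairB V x y = (1/2) * (x.2 y.1 + y.2 x.1) := fun x y => rfl
  -- Key: an element of L with zero first component annihilates Δ
  have hkey : ∀ w ∈ L, w.1 = 0 → ∀ y ∈ Δ, w.2 y = 0 := by
    intro w hw h1 y hy
    obtain ⟨z, hz, rfl⟩ := hy
    have := hiso w hw z hz
    rw [hpair, h1, map_zero] at this
    simp only [LinearMap.fst_apply]
    linarith
  -- projection L → Δ and a linear section
  have hmem : ∀ x : L, (x : V × Module.Dual ℝ V).1 ∈ Δ := fun x =>
    ⟨x.1, x.2, rfl⟩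
  let p : L →ₗ[ℝ] Δ :=
    ((LinearMap.fst ℝ V (Module.Dual ℝ V)).comp L.subtype).codRestrict Δ hmem
  have hpsurj : LinearMap.range p = ⊤ := by
    rw [LinearMap.range_eq_top]
    rintro ⟨y, z, hz, rfl⟩
    exact ⟨⟨z, hz⟩, rfl⟩
  obtain ⟨s, hs⟩ := p.exists_rightInverse_of_surjective hpsurj
  have hs' : ∀ X : Δ, ((s X : L) : V × Module.Dual ℝ V).1 = (X : V) := by
    intro X
    have := congrArg (fun f => f X) hs
    simpa [p, LinearMap.codRestrict] using congrArg Subtype.val this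
  -- the bilinear form
  let ε : Δ →ₗ[ℝ] Δ →ₗ[ℝ] ℝ :=
    LinearMap.mk₂ ℝ (fun X Y => ((s X : L) : V × Module.Dual ℝ V).2 (Y : V))
      (fun X X' Y => by simp)
      (fun c X Y => by simp)
      (fun X Y Y' => by simp)
      (fun c X Y => by simp)
  have hε : ∀ X Y : Δ, ε X Y = ((s X : L) : V × Module.Dual ℝ V).2 (Y : V) :=
    fun X Y => rfl
  -- well-definedness: any lift computes ε
  have hwd : ∀ w ∈ L, ∀ hw1 : w.1 ∈ Δ, ∀ Y : Δ, w.2 (Y : V) = ε ⟨w.1, hw1⟩ Y := by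
    intro w hw hw1 Y
    set X : Δ := ⟨w.1, hw1⟩
    have hd : (w - ((s X : L) : V × Module.Dual ℝ V)) ∈ L :=
      L.sub_mem hw (s X).2
    have hd1 : (w - ((s X : L) : V × Module.Dual ℝ V)).1 = 0 := by
      simp [hs' X]
      exact sub_self _
    have := hkey _ hd hd1 (Y : V) Y.2
    simp only [Prod.fst_sub, Prod.snd_sub, LinearMap.sub_apply] at this
    rw [hε]
    linarith
  -- L ⊆ LDE Δ ε
  have hsub : L ≤ LDE Δ ε := by
    intro w hw
    exact ⟨⟨w, hw, rfl⟩, fun Y => hwd w hw ⟨w, hw, rfl⟩ Y⟩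
  have hLeq : L = LDE Δ ε := by
    refine Submodule.eq_of_le_of_finrank_le hsub ?_
    rw [hdim]
    exact LDE_finrank_le Δ ε
  -- alternating
  have halt : ∀ X : Δ, ε X X = 0 := by
    intro X
    have hsl := (s X).2
    have := hiso _ hsl _ hsl
    rw [hpair] at this
    rw [hε]
    rw [hs' X] at this
    linarith
  refine ⟨ε, ⟨halt, hLeq⟩, ?_⟩
  -- uniqueness
  rintro ε' ⟨-, hε'⟩
  ext X Y
  have hsl : ((s X : L) : V × Module.Dual ℝ V) ∈ LDE Δ ε' := hε' ▸ (s X).2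
  obtain ⟨h, hval⟩ := hsl
  have hX : (⟨((s X : L) : V × Module.Dual ℝ V).1, h⟩ : Δ) = X :=
    Subtype.ext (hs' X)
  have hv := hval Y
  rw [hX] at hv
  rw [hε X Y]
  exact hv.symm
end

section
/- Let B be a skew-symmetric bilinear form on V, and let e^B : W → W be the map X+ξ ↦ X + ξ + ι_X B, where ι_X B = B(X,·) ∈ V*. Then e^B is orthogonal for the canonical pairing, and for every subspace Δ ⊆ V and alternating bilinear form ε on Δ, e^B(L(Δ,ε)) = L(Δ, ε + B|_Δ), where B|_Δ is the restriction of B to Δ. In particular, B-transforms preserve the projection to V, and hence the type m − dim π_V(L), of every maximal isotropic L ⊆ W. -/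
open Module

/-- The `B`-field transform `e^B : X+ξ ↦ X + ξ + ι_X B` of `W = V ⊕ V*`. -/
noncomputable def eBtransform {V : Type*} [AddCommGroup V] [Module ℝ V]
    (B : LinearMap.BilinForm ℝ V) :
    (V × Module.Dual ℝ V) →ₗ[ℝ] V × Module.Dual ℝ V where
  toFun w := (w.1, w.2 + B w.1)
  map_add' x y := by
    ext
    · rfl
    · show (x + y).2 _ + B (x + y).1 _ = _
      simp only [Prod.fst_add, Prod.snd_add, map_add, LinearMap.add_apply]
      ring
  map_smul' c x := by
    ext
    · rfl
    · show (c • x).2 _ + B (c • x).1 _ = _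
      simp only [Prod.smul_fst, Prod.smul_snd, map_smul, LinearMap.smul_apply,
        LinearMap.add_apply, smul_eq_mul, RingHom.id_apply]
      ring

/-- A `B`-field transform is orthogonal, sends `L(Δ,ε)` to `L(Δ, ε + B|_Δ)`, and preserves
the projection to `V` (hence the type) of every subspace of `W`. -/
theorem eBtransform_properties
    {V : Type*} [AddCommGroup V] [Module ℝ V] [FiniteDimensional ℝ V]
    (B : LinearMap.BilinForm ℝ V) (hskew : ∀ X Y : V, B X Y = - B Y X) :
    (∀ x y, pairB V (eBtransform B x) (eBtransform B y) = pairB V x y) ∧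
    (∀ (Δ : Submodule ℝ V) (ε : Δ →ₗ[ℝ] Δ →ₗ[ℝ] ℝ),
      Submodule.map (eBtransform B) (LDE Δ ε) = LDE Δ (ε + B.restrict Δ)) ∧
    (∀ L : Submodule ℝ (V × Module.Dual ℝ V),
      Submodule.map (LinearMap.fst ℝ V (Module.Dual ℝ V)) (Submodule.map (eBtransform B) L)
        = Submodule.map (LinearMap.fst ℝ V (Module.Dual ℝ V)) L) := by

  refine ⟨?_, ?_, ?_⟩
  · intro x y
    simp only [pairB, eBtransform, LinearMap.mk₂_apply, LinearMap.coe_mk, AddHom.coe_mk,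
      LinearMap.add_apply]
    have := hskew x.1 y.1
    ring_nf
    linarith [hskew x.1 y.1]
  · intro Δ ε
    ext w
    simp only [Submodule.mem_map]
    constructor
    · rintro ⟨a, ⟨ha, hα⟩, rfl⟩
      refine ⟨ha, fun Y => ?_⟩
      show a.2 Y + B a.1 Y = _
      rw [hα Y]
      simp only [LinearMap.add_apply, LinearMap.BilinForm.restrict_apply]
      rfl
    · rintro ⟨hw, hη⟩
      refine ⟨(w.1, w.2 - B w.1), ⟨hw, fun Y => ?_⟩, ?_⟩
      · have := hη Y
        simp only [LinearMap.add_apply, LinearMap.BilinForm.restrict_apply,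
          LinearMap.domRestrict_apply] at this
        show w.2 Y - B w.1 Y = ε ⟨w.1, hw⟩ Y
        linarith
      · show (w.1, w.2 - B w.1 + B w.1) = w
        simp
  · intro L
    ext x
    simp only [Submodule.mem_map, LinearMap.fst_apply]
    constructor
    · rintro ⟨y, ⟨a, ha, rfl⟩, rfl⟩
      exact ⟨a, ha, rfl⟩
    · rintro ⟨a, ha, rfl⟩
      exact ⟨eBtransform B a, ⟨a, ha, rfl⟩, rfl⟩
end

section
/- Let β : V* → V be a linear map that is skew in the sense that ξ(β(η)) = −η(β(ξ)) for all ξ, η ∈ V* (a bivector), and let e^β : W → W be the map X+ξ ↦ X + β(ξ) + ξ. Then e^β is orthogonal for the canonical pairing; for every maximal isotropic L ⊆ W, the image e^β(L) is maximal isotropic, e^β(L) ∩ (V ⊕ {0}) = L ∩ (V ⊕ {0}), and dim π_V(e^β(L)) ≡ dim π_V(L) (mod 2), i.e. a β-transform changes the type of a maximal isotropic by an even number. -/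
open Module

/-- The `β`-field transform `e^β : X+ξ ↦ X + β(ξ) + ξ` of `W = V ⊕ V*` determined by a
bivector `β : V* → V`. -/
noncomputable def betaTransform {V : Type*} [AddCommGroup V] [Module ℝ V]
    (β : Module.Dual ℝ V →ₗ[ℝ] V) :
    (V × Module.Dual ℝ V) →ₗ[ℝ] V × Module.Dual ℝ V where
  toFun w := (w.1 + β w.2, w.2)
  map_add' x y := by
    ext
    · show (x + y).1 + β (x + y).2 = _
      simp only [Prod.fst_add, Prod.snd_add, map_add]
      abel
    · rfl
  map_smul' c x := by
    ext
    · show (c • x).1 + β (c • x).2 = _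
      simp only [Prod.smul_fst, Prod.smul_snd, map_smul, smul_add, RingHom.id_apply]
    · rfl

open Module LinearMap

lemma finrank_map_add_eq' {M N : Type*} [AddCommGroup M] [Module ℝ M] [AddCommGroup N] [Module ℝ N]
    [FiniteDimensional ℝ M] (g : M →ₗ[ℝ] N) (S : Submodule ℝ M) :
    finrank ℝ (S.map g) + finrank ℝ (LinearMap.ker g ⊓ S : Submodule ℝ M) = finrank ℝ S := by
  have h1 := (g.comp S.subtype).finrank_range_add_finrank_ker
  have h2 : LinearMap.range (g.comp S.subtype) = S.map g := by
    rw [LinearMap.range_comp, Submodule.range_subtype]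
  have h3 : LinearMap.ker (g.comp S.subtype) = Submodule.comap S.subtype (LinearMap.ker g ⊓ S) := by
    rw [LinearMap.ker_comp]
    ext x
    simp [Submodule.mem_comap, x.2]
  have h4 : finrank ℝ (Submodule.comap S.subtype (LinearMap.ker g ⊓ S)) =
      finrank ℝ (LinearMap.ker g ⊓ S : Submodule ℝ M) :=
    (Submodule.comapSubtypeEquivOfLe inf_le_right).finrank_eq
  rw [h2, h3, h4] at h1
  exact h1

lemma finrank_comap_eq' {M N : Type*} [AddCommGroup M] [Module ℝ M] [AddCommGroup N] [Module ℝ N]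
    [FiniteDimensional ℝ M] (g : M →ₗ[ℝ] N) (S : Submodule ℝ N) :
    finrank ℝ (S.comap g) =
      finrank ℝ (S ⊓ LinearMap.range g : Submodule ℝ N) + finrank ℝ (LinearMap.ker g) := by
  have h := finrank_map_add_eq' g (S.comap g)
  have h2 : (S.comap g).map g = S ⊓ LinearMap.range g := by
    rw [Submodule.map_comap_eq, inf_comm]
  have h3 : LinearMap.ker g ⊓ S.comap g = LinearMap.ker g := by
    rw [inf_eq_left]
    intro x hx
    simp only [Submodule.mem_comap, LinearMap.mem_ker.mp hx]
    exact S.zero_mem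
  rw [h2, h3] at h
  omega

lemma finrank_dualAnnihilator' {V : Type*} [AddCommGroup V] [Module ℝ V] [FiniteDimensional ℝ V]
    (E : Subspace ℝ V) :
    finrank ℝ E.dualAnnihilator + finrank ℝ E = finrank ℝ V := by
  rw [← E.quotEquivAnnihilator.finrank_eq, Submodule.finrank_quotient_add_finrank]

lemma even_finrank_of_alt' {U : Type*} [AddCommGroup U] [Module ℝ U] [FiniteDimensional ℝ U]
    (B : LinearMap.BilinForm ℝ U) (hskew : ∀ u v, B u v = - B v u)
    (hnd : B.Nondegenerate) : Even (finrank ℝ U) := by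
  classical
  by_contra hodd
  rw [Nat.not_even_iff_odd] at hodd
  let b := Module.finBasis ℝ U
  have hdet := (LinearMap.BilinForm.nondegenerate_iff_det_ne_zero b).mp hnd
  set M := LinearMap.BilinForm.toMatrix b B with hM
  have hskewM : M.transpose = -M := by
    ext i j
    simp [hM, LinearMap.BilinForm.toMatrix_apply, Matrix.transpose_apply]
    exact hskew (b j) (b i)
  have h2 : M.det = - M.det := by
    conv_lhs => rw [← Matrix.det_transpose, hskewM]
    rw [Matrix.det_neg]
    simp [hodd.neg_one_pow]
  exact hdet (by linarith)

lemma key_parity' {V D : Type*} [AddCommGroup V] [Module ℝ V] [FiniteDimensional ℝ V]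
    [AddCommGroup D] [Module ℝ D] [FiniteDimensional ℝ D]
    (ev : D →ₗ[ℝ] Module.Dual ℝ V) (hev : LinearMap.ker ev = ⊥)
    (L : Submodule ℝ (V × D))
    (hiso : ∀ x ∈ L, ∀ y ∈ L, (ev x.2) y.1 + (ev y.2) x.1 = 0)
    (hdim : finrank ℝ L = finrank ℝ V) :
    (finrank ℝ (L.map (LinearMap.fst ℝ V D)) + finrank ℝ (L.map (LinearMap.snd ℝ V D))) % 2
      = finrank ℝ V % 2 := by
  classical
  set m := finrank ℝ V with hm
  set f : L →ₗ[ℝ] V := (LinearMap.fst ℝ V D).comp L.subtype with hfdef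
  set g : L →ₗ[ℝ] D := (LinearMap.snd ℝ V D).comp L.subtype with hgdef
  set g' : L →ₗ[ℝ] Module.Dual ℝ V := ev.comp g with hg'def
  have happ : ∀ u : L, g' u = ev (u : V × D).2 ∧ f u = (u : V × D).1 := fun u => ⟨rfl, rfl⟩
  have hskewfg : ∀ u v : L, (g' u) (f v) = -((g' v) (f u)) := by
    intro u v
    have h := hiso u.1 u.2 v.1 v.2
    have h1 := (happ u).1; have h2 := (happ u).2
    have h3 := (happ v).1; have h4 := (happ v).2
    rw [h1, h3, h2, h4]
    linarith
  have hrangef : LinearMap.range f = L.map (LinearMap.fst ℝ V D) := by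
    rw [hfdef, LinearMap.range_comp, Submodule.range_subtype]
  have hrangeg : LinearMap.range g = L.map (LinearMap.snd ℝ V D) := by
    rw [hgdef, LinearMap.range_comp, Submodule.range_subtype]
  have hf : finrank ℝ (LinearMap.range f) + finrank ℝ (LinearMap.ker f) = m := by
    rw [← hdim]; exact LinearMap.finrank_range_add_finrank_ker f
  have hkerg' : LinearMap.ker g' = LinearMap.ker g := by
    rw [hg'def, LinearMap.ker_comp, hev, Submodule.comap_bot]
  have hrg' : finrank ℝ (LinearMap.range g') = finrank ℝ (LinearMap.range g) := by
    rw [hg'def, LinearMap.range_comp]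
    exact ((LinearMap.range g).equivMapOfInjective ev
      (LinearMap.ker_eq_bot.mp hev)).symm.finrank_eq
  have hg : finrank ℝ (LinearMap.range g) + finrank ℝ (LinearMap.ker g) = m := by
    rw [← hdim, ← hrg', ← hkerg']; exact LinearMap.finrank_range_add_finrank_ker g'
  -- the alternating form on L
  set C : L →ₗ[ℝ] Module.Dual ℝ L := f.dualMap.comp g' with hCdef
  have hCapp : ∀ u v : L, C u v = (g' u) (f v) := fun u v => rfl
  set A := (LinearMap.range f).dualAnnihilator with hAdef
  have hkerC : LinearMap.ker C = Submodule.comap g' A := by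
    ext u
    simp only [LinearMap.mem_ker, Submodule.mem_comap, hAdef, Submodule.mem_dualAnnihilator]
    constructor
    · intro hu w hw
      obtain ⟨v, rfl⟩ := hw
      exact DFunLike.congr_fun hu v
    · intro hu
      ext v
      exact hu (f v) ⟨v, rfl⟩
  -- dimension of A ⊓ range g' via squeeze
  have hΔ : finrank ℝ ((LinearMap.ker f).map g') + finrank ℝ
      (LinearMap.ker g' ⊓ LinearMap.ker f : Submodule ℝ L) = finrank ℝ (LinearMap.ker f) :=
    finrank_map_add_eq' g' (LinearMap.ker f)
  have hkk : LinearMap.ker g' ⊓ LinearMap.ker f = ⊥ := by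
    rw [hkerg', eq_bot_iff]
    rintro u ⟨hug, huf⟩
    have h1 : (u : V × D).1 = 0 := huf
    have h2 : (u : V × D).2 = 0 := hug
    have h3 : (u : V × D) = 0 := Prod.ext h1 h2
    simpa using Subtype.ext h3
  rw [hkk, finrank_bot] at hΔ
  have hΔle : (LinearMap.ker f).map g' ≤ A ⊓ LinearMap.range g' := by
    refine le_inf ?_ ?_
    · rintro x ⟨u, hu, rfl⟩
      rw [hAdef, Submodule.mem_dualAnnihilator]
      rintro w ⟨v, rfl⟩
      have h5 := hskewfg u v
      rw [LinearMap.mem_ker.mp hu] at h5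
      simpa using h5
    · rintro x ⟨u, hu, rfl⟩
      exact ⟨u, rfl⟩
  have hAdim : finrank ℝ A + finrank ℝ (LinearMap.range f) = m := finrank_dualAnnihilator' _
  have hsq : finrank ℝ (A ⊓ LinearMap.range g' : Submodule ℝ (Module.Dual ℝ V))
      = finrank ℝ (LinearMap.ker f) := by
    have le1 := Submodule.finrank_mono hΔle
    have le2 := Submodule.finrank_mono (inf_le_left : A ⊓ LinearMap.range g' ≤ A)
    omega
  have hkerCdim : finrank ℝ (LinearMap.ker C)
      = finrank ℝ (LinearMap.ker f) + finrank ℝ (LinearMap.ker g) := by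
    rw [hkerC, finrank_comap_eq', hsq, hkerg']
  -- complement of ker C
  obtain ⟨U, hU⟩ := Submodule.exists_isCompl (LinearMap.ker C)
  have hUdim : finrank ℝ (LinearMap.ker C) + finrank ℝ U = finrank ℝ L :=
    Submodule.finrank_add_eq_of_isCompl hU
  set B : LinearMap.BilinForm ℝ U := U.subtype.dualMap.comp (C.comp U.subtype) with hBdef
  have hBapp : ∀ u v : U, B u v = C u.1 v.1 := fun u v => rfl
  have hBskew : ∀ u v : U, B u v = - B v u := by
    intro u v
    rw [hBapp, hBapp, hCapp, hCapp]
    exact hskewfg _ _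
  have hBnd : B.Nondegenerate := by
    suffices hsl : LinearMap.SeparatingLeft B from
      ⟨hsl, fun y hy => hsl y (fun x => by rw [hBskew, hy x, neg_zero])⟩
    intro u hu
    have hmem : (u : L) ∈ LinearMap.ker C := by
      rw [LinearMap.mem_ker]
      ext w
      obtain ⟨y, hy, z, hz, rfl⟩ := Submodule.mem_sup.mp
        (by rw [hU.sup_eq_top]; exact Submodule.mem_top : (w : L) ∈ LinearMap.ker C ⊔ U)
      have hy0 : C u.1 y = 0 := by
        rw [hCapp, hskewfg]
        have hCy : C y = 0 := LinearMap.mem_ker.mp hy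
        rw [← hCapp, hCy]
        simp
      have hz0 : C u.1 z = 0 := hu ⟨z, hz⟩
      simp [map_add, hy0, hz0]
    have hb : (u : L) ∈ LinearMap.ker C ⊓ U := ⟨hmem, u.2⟩
    rw [hU.inf_eq_bot] at hb
    exact Subtype.ext hb
  have heven : Even (finrank ℝ U) := even_finrank_of_alt' (U := U) B hBskew hBnd
  obtain ⟨t, ht⟩ := heven
  rw [← hrangef, ← hrangeg]
  rw [hdim, hkerCdim] at hUdim
  omega

/-- A `β`-transform is orthogonal, maps maximal isotropics to maximal isotropics,
preserves `L ∩ (V ⊕ {0})`, and changes the type of a maximal isotropic by an even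
number: `dim π_V(e^β L) ≡ dim π_V(L) (mod 2)`. -/
theorem betaTransform_properties
    {V : Type*} [AddCommGroup V] [Module ℝ V] [FiniteDimensional ℝ V]
    (β : Module.Dual ℝ V →ₗ[ℝ] V)
    (hskew : ∀ ξ η : Module.Dual ℝ V, ξ (β η) = - η (β ξ)) :
    (∀ x y, pairB V (betaTransform β x) (betaTransform β y) = pairB V x y) ∧
    ∀ L : Submodule ℝ (V × Module.Dual ℝ V),
      (∀ x ∈ L, ∀ y ∈ L, pairB V x y = 0) →
      Module.finrank ℝ L = Module.finrank ℝ V →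
      ((∀ x ∈ Submodule.map (betaTransform β) L, ∀ y ∈ Submodule.map (betaTransform β) L,
          pairB V x y = 0) ∧
       Module.finrank ℝ (Submodule.map (betaTransform β) L) = Module.finrank ℝ V ∧
       Submodule.map (betaTransform β) L
           ⊓ (⊤ : Submodule ℝ V).prod (⊥ : Submodule ℝ (Module.Dual ℝ V))
         = L ⊓ (⊤ : Submodule ℝ V).prod (⊥ : Submodule ℝ (Module.Dual ℝ V)) ∧
       Module.finrank ℝ (Submodule.map (LinearMap.fst ℝ V (Module.Dual ℝ V))
           (Submodule.map (betaTransform β) L)) % 2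
         = Module.finrank ℝ (Submodule.map (LinearMap.fst ℝ V (Module.Dual ℝ V)) L) % 2) := by
  have hbt : ∀ w : V × Module.Dual ℝ V, betaTransform β w = (w.1 + β w.2, w.2) :=
    fun w => rfl
  have horth : ∀ x y, pairB V (betaTransform β x) (betaTransform β y) = pairB V x y := by
    intro x y
    rw [hbt, hbt]
    simp only [pairB, LinearMap.mk₂_apply, map_add]
    have h := hskew x.2 y.2
    ring_nf
    linarith
  refine ⟨horth, fun L hiso hdim => ?_⟩
  have hiso' : ∀ x ∈ Submodule.map (betaTransform β) L,
      ∀ y ∈ Submodule.map (betaTransform β) L, pairB V x y = 0 := by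
    rintro x ⟨u, hu, rfl⟩ y ⟨v, hv, rfl⟩
    rw [horth]
    exact hiso u hu v hv
  have hinj : Function.Injective (betaTransform β) := by
    intro a b h
    rw [hbt, hbt] at h
    obtain ⟨h1, h2⟩ := Prod.ext_iff.mp h
    rw [h2] at h1
    have h3 : a.1 = b.1 := by
      have := add_right_cancel h1
      exact this
    exact Prod.ext h3 h2
  have hdim' : Module.finrank ℝ (Submodule.map (betaTransform β) L) = Module.finrank ℝ V := by
    rw [← hdim]
    exact (Submodule.equivMapOfInjective _ hinj L).symm.finrank_eq
  refine ⟨hiso', hdim', ?_, ?_⟩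
  · ext w
    simp only [Submodule.mem_inf, Submodule.mem_prod, Submodule.mem_top, true_and,
      Submodule.mem_bot, Submodule.mem_map]
    constructor
    · rintro ⟨⟨u, hu, rfl⟩, h2⟩
      rw [hbt] at h2 ⊢
      have hu2 : u.2 = 0 := h2
      refine ⟨?_, h2⟩
      rw [hu2, map_zero, add_zero]
      have he : ((u.1 : V), (0 : Module.Dual ℝ V)) = u := by rw [← hu2]
      rw [he]
      exact hu
    · rintro ⟨hw, h2⟩
      refine ⟨⟨w, hw, ?_⟩, h2⟩
      rw [hbt, h2, map_zero, add_zero]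
      exact Prod.ext rfl h2.symm
  · -- parity
    have hiso_ev : ∀ x ∈ L, ∀ y ∈ L,
        (LinearMap.id (R := ℝ) (M := Module.Dual ℝ V) x.2) y.1
          + (LinearMap.id (R := ℝ) (M := Module.Dual ℝ V) y.2) x.1 = 0 := by
      intro x hx y hy
      have h := hiso x hx y hy
      simp only [pairB, LinearMap.mk₂_apply] at h
      simp only [LinearMap.id_coe, id_eq]
      linarith
    have hiso_ev' : ∀ x ∈ Submodule.map (betaTransform β) L,
        ∀ y ∈ Submodule.map (betaTransform β) L,
        (LinearMap.id (R := ℝ) (M := Module.Dual ℝ V) x.2) y.1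
          + (LinearMap.id (R := ℝ) (M := Module.Dual ℝ V) y.2) x.1 = 0 := by
      intro x hx y hy
      have h := hiso' x hx y hy
      simp only [pairB, LinearMap.mk₂_apply] at h
      simp only [LinearMap.id_coe, id_eq]
      linarith
    have key1 := key_parity' LinearMap.id LinearMap.ker_id L hiso_ev hdim
    have key2 := key_parity' LinearMap.id LinearMap.ker_id
      (Submodule.map (betaTransform β) L) hiso_ev' hdim'
    have hsnd : Submodule.map (LinearMap.snd ℝ V (Module.Dual ℝ V))
        (Submodule.map (betaTransform β) L)
        = Submodule.map (LinearMap.snd ℝ V (Module.Dual ℝ V)) L := by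
      rw [← Submodule.map_comp]
      congr 1
    rw [hsnd] at key2
    omega
end

section
/- The Mukai pairing is symmetric or skew-symmetric according to the dimension: for all s, t ∈ ∧•V*, (s,t) = (−1)^{m(m−1)/2} (t,s). -/
open Module

set_option synthInstance.maxHeartbeats 1000000
set_option maxHeartbeats 1000000

/-- The spin representation of `W = V ⊕ V*` on the forms `∧•V*`:
`(X+ξ)·φ = ι_X φ + ξ ∧ φ`. -/
noncomputable def spinAction {V : Type*} [AddCommGroup V] [Module ℝ V]
    (v : V × Module.Dual ℝ V) :
    ExteriorAlgebra ℝ (Module.Dual ℝ V) →ₗ[ℝ] ExteriorAlgebra ℝ (Module.Dual ℝ V) :=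
  CliffordAlgebra.contractLeft (Module.Dual.eval ℝ V v.1)
    + LinearMap.mulLeft ℝ (ExteriorAlgebra.ι ℝ v.2)

/-- The Mukai pairing `(s,t) = [s^⊤ ∧ t]_m`, valued in the degree-`m` component of the
exterior algebra of `V*`. -/
noncomputable def mukai {V : Type*} [AddCommGroup V] [Module ℝ V] [FiniteDimensional ℝ V]
    (s t : ExteriorAlgebra ℝ (Module.Dual ℝ V)) :
    ExteriorAlgebra ℝ (Module.Dual ℝ V) :=
  GradedAlgebra.proj (fun i : ℕ => ⋀[ℝ]^i (Module.Dual ℝ V)) (Module.finrank ℝ V)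
    (CliffordAlgebra.reverse (Q := (0 : QuadraticForm ℝ (Module.Dual ℝ V))) s * t)

section aux

variable {R : Type*} {M : Type*} [CommRing R] [AddCommGroup M] [Module R M]

open ExteriorAlgebra

lemma aux_ι_mul_comm {n : ℕ} {x : ExteriorAlgebra R M} (hx : x ∈ ⋀[R]^n M) (v : M) :
    ι R v * x = ((-1 : R) ^ n) • (x * ι R v) := by
  induction hx using Submodule.pow_induction_on_left' with
  | algebraMap r =>
      rw [pow_zero, one_smul, Algebra.commutes]
  | add x y i hx hy ihx ihy =>
      rw [mul_add, add_mul, smul_add, ihx, ihy]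
  | mem_mul m hm i x hx ih =>
      obtain ⟨w, rfl⟩ := hm
      have hswap : ι R v * ι R w = -(ι R w * ι R v) := by
        rw [eq_neg_iff_add_eq_zero, add_comm]
        exact ExteriorAlgebra.ι_add_mul_swap w v
      rw [← mul_assoc, hswap, neg_mul, mul_assoc, ih, pow_succ]
      rw [mul_smul, mul_assoc]
      simp [smul_smul, mul_comm]

lemma aux_reverse_eq_smul {n : ℕ} {x : ExteriorAlgebra R M} (hx : x ∈ ⋀[R]^n M) :
    CliffordAlgebra.reverse (Q := (0 : QuadraticForm R M)) x
      = ((-1 : R) ^ (n * (n - 1) / 2)) • x := by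
  induction hx using Submodule.pow_induction_on_left' with
  | algebraMap r => simp [CliffordAlgebra.reverse.commutes]
  | add x y i hx hy ihx ihy =>
      rw [map_add, ihx, ihy, smul_add]
  | mem_mul m hm i x hx ih =>
      obtain ⟨w, rfl⟩ := hm
      rw [CliffordAlgebra.reverse.map_mul, CliffordAlgebra.reverse_ι, ih]
      rw [smul_mul_assoc]
      have hcomm : x * ι R w = ((-1 : R) ^ i) • (ι R w * x) := by
        rw [aux_ι_mul_comm hx w, smul_smul, ← mul_pow, neg_mul_neg, one_mul, one_pow, one_smul]
      rw [hcomm, smul_smul, ← pow_add]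
      congr 2
      have : i * (i - 1) / 2 + i = (i + 1) * ((i + 1) - 1) / 2 := by
        rw [← Nat.choose_two_right, ← Nat.choose_two_right,
          Nat.choose_succ_succ, Nat.choose_one_right, Nat.add_comm]
      rw [this, Nat.succ_eq_add_one]

end aux


lemma aux_proj_reverse {R : Type*} {M : Type*} [CommRing R] [AddCommGroup M] [Module R M]
    (m : ℕ) (u : ExteriorAlgebra R M) :
    GradedAlgebra.proj (fun i : ℕ => ⋀[R]^i M) m
        (CliffordAlgebra.reverse (Q := (0 : QuadraticForm R M)) u)
      = ((-1 : R) ^ (m * (m - 1) / 2)) •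
          GradedAlgebra.proj (fun i : ℕ => ⋀[R]^i M) m u := by
  induction u using DirectSum.Decomposition.inductionOn (fun i : ℕ => ⋀[R]^i M) with
  | zero => simp
  | add x y hx hy => rw [map_add, map_add, map_add, hx, hy, smul_add]
  | homogeneous x =>
      rename_i i
      obtain ⟨x, hx⟩ := x
      rw [aux_reverse_eq_smul hx, map_smul]
      rcases eq_or_ne i m with rfl | h
      · rfl
      · have : GradedAlgebra.proj (fun i : ℕ => ⋀[R]^i M) m x = 0 := by
          rw [GradedAlgebra.proj_apply, DirectSum.decompose_of_mem_ne (fun i : ℕ => ⋀[R]^i M) hx h]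
        rw [this, smul_zero, smul_zero]

/-- The Mukai pairing is symmetric or skew-symmetric according to the dimension:
`(s,t) = (−1)^{m(m−1)/2} (t,s)`. -/
theorem mukai_symmetry
    {V : Type*} [AddCommGroup V] [Module ℝ V] [FiniteDimensional ℝ V]
    (s t : ExteriorAlgebra ℝ (Module.Dual ℝ V)) :
    mukai s t
      = ((-1 : ℝ) ^ (Module.finrank ℝ V * (Module.finrank ℝ V - 1) / 2)) • mukai t s := by
  have h := aux_proj_reverse (R := ℝ) (M := Module.Dual ℝ V) (Module.finrank ℝ V)
    (CliffordAlgebra.reverse (Q := (0 : QuadraticForm ℝ (Module.Dual ℝ V))) t * s)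
  rw [CliffordAlgebra.reverse.map_mul, CliffordAlgebra.reverse_reverse] at h
  exact h
end

section
/- Let J : W → W be an ℝ-linear map with J∘J = −id_W, and suppose that the +i-eigenspace L of the complexified map J_ℂ on W ⊗ ℂ is isotropic for the ℂ-bilinear extension of the canonical pairing. Then J is orthogonal, i.e. ⟨Jx, Jy⟩ = ⟨x, y⟩ for all x, y ∈ W; consequently the bilinear form (x,y) ↦ ⟨Jx, y⟩ is alternating and nondegenerate (a symplectic form) on W. -/
open Module

/-- If `J : W → W` squares to `−1` and the `+i`-eigenspace of its complexification is
isotropic for the ℂ-bilinear extension of the canonical pairing, then `J` is orthogonal,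
and `(x,y) ↦ ⟨Jx, y⟩` is a symplectic (alternating nondegenerate) form on `W`. -/
theorem isotropic_eigenspace_implies_orthogonal
    {V : Type*} [AddCommGroup V] [Module ℝ V] [FiniteDimensional ℝ V]
    (J : (V × Module.Dual ℝ V) →ₗ[ℝ] V × Module.Dual ℝ V)
    (hJ2 : J ∘ₗ J = -LinearMap.id)
    (hiso : ∀ x ∈ Module.End.eigenspace (LinearMap.baseChange ℂ J) Complex.I,
            ∀ y ∈ Module.End.eigenspace (LinearMap.baseChange ℂ J) Complex.I,
              LinearMap.BilinForm.baseChange ℂ (pairB V) x y = 0) :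
    (∀ x y, pairB V (J x) (J y) = pairB V x y) ∧
    (∀ x, pairB V (J x) x = 0) ∧
    (∀ x, (∀ y, pairB V (J x) y = 0) → x = 0) := by
  have hJJ : ∀ x, J (J x) = -x := fun x => by
    have := LinearMap.congr_fun hJ2 x; simpa using this
  -- membership of u_x = 1 ⊗ x - I ⊗ Jx in eigenspace
  have hmem : ∀ x : V × Module.Dual ℝ V,
      ((1:ℂ) ⊗ₜ[ℝ] x - Complex.I ⊗ₜ[ℝ] (J x)) ∈
        Module.End.eigenspace (LinearMap.baseChange ℂ J) Complex.I := by
    intro x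
    rw [Module.End.mem_eigenspace_iff]
    simp [TensorProduct.smul_tmul', hJJ x, smul_sub, Complex.I_mul_I, sub_eq_add_neg]
    simp only [TensorProduct.neg_tmul, TensorProduct.tmul_neg, neg_neg]
    abel
  -- key identities
  have key : ∀ x y, pairB V (J x) (J y) = pairB V x y ∧
      pairB V x (J y) + pairB V (J x) y = 0 := by
    intro x y
    have h := hiso _ (hmem x) _ (hmem y)
    simp only [TensorProduct.sub_tmul, TensorProduct.tmul_sub, map_sub, LinearMap.sub_apply,
      LinearMap.BilinForm.baseChange_tmul] at h
    simp only [Complex.real_smul, one_mul, mul_one, Complex.I_mul_I] at h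
    have h1 := congrArg Complex.re h
    have h2 := congrArg Complex.im h
    simp at h1 h2
    constructor <;> linarith
  have hsymm : ∀ a b : V × Module.Dual ℝ V, pairB V a b = pairB V b a := by
    intro a b; simp [pairB]; ring
  refine ⟨fun x y => (key x y).1, ?_, ?_⟩
  · intro x
    have := (key x x).2
    rw [hsymm x (J x)] at this
    linarith
  · intro x hx
    have hJx : J x = 0 := by
      have h1 : (J x).1 = 0 := by
        rw [← Module.forall_dual_apply_eq_zero_iff ℝ]
        intro ψ
        have := hx (0, ψ)
        simp [pairB] at this
        simpa using this
      have h2 : (J x).2 = 0 := by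
        ext u
        have := hx (u, 0)
        simp [pairB, h1] at this
        simpa using this
      exact Prod.ext h1 h2
    have := hJJ x
    rw [hJx, map_zero] at this
    simpa [neg_eq_zero] using this.symm
end

section
/- If there exists an ℝ-linear map J : W → W with J∘J = −id_W which is orthogonal for the canonical pairing, i.e. ⟨Jx, Jy⟩ = ⟨x, y⟩ for all x, y ∈ W, then m = dim V is even. -/
open Module Matrix Polynomial
open scoped Kronecker

/-- Evaluating the characteristic polynomial of a real matrix. -/
private lemma evalCharpolyAux {n : Type*} [Fintype n] [DecidableEq n]
    (M : Matrix n n ℝ) (t : ℝ) :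
    M.charpoly.eval t = (t • (1 : Matrix n n ℝ) - M).det := by
  rw [Matrix.charpoly, ← Polynomial.coe_evalRingHom, RingHom.map_det]
  congr 1
  ext i j
  by_cases h : i = j <;>
    simp [h, Matrix.charmatrix_apply, Matrix.one_apply, Matrix.diagonal_apply]

/-- A real matrix of even size with no real eigenvalue has positive determinant. -/
private lemma detPosAux {n : Type*} [Fintype n] [DecidableEq n] (M : Matrix n n ℝ)
    (hc : Even (Fintype.card n)) (hc0 : 0 < Fintype.card n)
    (h : ∀ t : ℝ, (t • (1 : Matrix n n ℝ) - M).det ≠ 0) :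
    0 < M.det := by
  set p := M.charpoly with hp
  have hev : ∀ t, p.eval t = (t • (1 : Matrix n n ℝ) - M).det := evalCharpolyAux M
  have hnd : p.natDegree = Fintype.card n := M.charpoly_natDegree_eq_dim
  have hdeg : 0 < p.degree := natDegree_pos_iff_degree_pos.mp (by omega)
  have hlc : 0 ≤ p.leadingCoeff := by
    rw [M.charpoly_monic.leadingCoeff]; exact zero_le_one
  have hmono := p.tendsto_atTop_of_leadingCoeff_nonneg hdeg hlc
  obtain ⟨x, hx1, hx0⟩ :=
    ((hmono.eventually_ge_atTop 1).and (Filter.eventually_ge_atTop (0:ℝ))).exists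
  have hpx : (0:ℝ) < p.eval x := by linarith
  have hne : p.eval 0 ≠ 0 := by rw [hev]; exact h 0
  have hpos : 0 < p.eval 0 := by
    rcases lt_or_gt_of_ne hne with hlt | hgt
    · exfalso
      obtain ⟨t, -, ht⟩ := intermediate_value_Icc hx0
        ((Polynomial.continuous p).continuousOn (s := Set.Icc 0 x))
        (Set.mem_Icc.mpr ⟨hlt.le, hpx.le⟩)
      exact h t (by rw [← hev]; exact ht)
    · exact hgt
  have h0 : p.eval 0 = ((-1:ℝ)) ^ (Fintype.card n) * M.det := by
    rw [hev]; simp [Matrix.det_neg]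
  rw [h0, hc.neg_one_pow, one_mul] at hpos
  exact hpos

private def sumProdEquiv (m : ℕ) : (Fin m ⊕ Fin m) ≃ Fin m × Fin 2 where
  toFun := Sum.elim (fun i => (i, 0)) (fun i => (i, 1))
  invFun p := if p.2 = 0 then Sum.inl p.1 else Sum.inr p.1
  left_inv := by rintro (i | i) <;> simp
  right_inv := by rintro ⟨i, j⟩; fin_cases j <;> simp

private lemma pairB_apply' {V : Type*} [AddCommGroup V] [Module ℝ V]
    (x y : V × Module.Dual ℝ V) :
    pairB V x y = (1/2) * (x.2 y.1 + y.2 x.1) := rfl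

/-- If `W = V ⊕ V*` admits an orthogonal complex structure, then `dim V` is even. -/
theorem even_dim_of_orthogonal_complex_structure
    {V : Type*} [AddCommGroup V] [Module ℝ V] [FiniteDimensional ℝ V]
    (J : (V × Module.Dual ℝ V) →ₗ[ℝ] V × Module.Dual ℝ V)
    (hJ2 : J ∘ₗ J = -LinearMap.id)
    (horth : ∀ x y, pairB V (J x) (J y) = pairB V x y) :
    Even (Module.finrank ℝ V) := by
  set m := finrank ℝ V with hm
  rcases Nat.eq_zero_or_pos m with h0 | hmpos
  · rw [h0]; exact Even.zero
  have hJJ : ∀ y, J (J y) = -y := by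
    intro y
    have := LinearMap.ext_iff.mp hJ2 y
    simpa using this
  have hsymm : ∀ x y, pairB V x y = pairB V y x := by
    intro x y; rw [pairB_apply', pairB_apply']; ring
  have hskew : ∀ x y, pairB V x (J y) = - pairB V y (J x) := by
    intro x y
    have h1 : pairB V (J (J x)) (J y) = pairB V (J x) y := horth (J x) y
    rw [hJJ x] at h1
    have h2 : pairB V (-x) (J y) = - pairB V x (J y) := by simp
    rw [h2] at h1
    linarith [h1, hsymm y (J x), hsymm (J x) y]
  -- matrices
  let b := finBasis ℝ V
  let bW : Basis (Fin m ⊕ Fin m) ℝ (V × Module.Dual ℝ V) := b.prod b.dualBasis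
  set G := LinearMap.BilinForm.toMatrix bW (pairB V) with hGdef
  set JM := LinearMap.toMatrix bW bW J with hJMdef
  set Ω := LinearMap.BilinForm.toMatrix bW ((pairB V).compRight J) with hΩdef
  have hcard : Fintype.card (Fin m ⊕ Fin m) = 2 * m := by simp [two_mul]
  have hceven : Even (Fintype.card (Fin m ⊕ Fin m)) := by rw [hcard]; exact even_two_mul m
  have hcpos : 0 < Fintype.card (Fin m ⊕ Fin m) := by omega
  have hΩeq : Ω = G * JM := BilinForm.toMatrix_compRight bW (pairB V) J
  have hJM2 : JM * JM = -1 := by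
    rw [hJMdef, ← LinearMap.toMatrix_comp bW bW bW J J, hJ2]
    rw [map_neg (LinearMap.toMatrix bW bW) LinearMap.id, LinearMap.toMatrix_id]
  -- determinant of G
  have hGval : reindex (sumProdEquiv m) (sumProdEquiv m) G =
      (1/2 : ℝ) • ((1 : Matrix (Fin m) (Fin m) ℝ) ⊗ₖ !![(0:ℝ),1;1,0]) := by
    ext ⟨i, a⟩ ⟨j, c⟩
    fin_cases a <;> fin_cases c <;>
      simp [hGdef, bW, sumProdEquiv, BilinForm.toMatrix_apply, Basis.prod_apply, pairB,
        Matrix.one_apply, Basis.dualBasis_apply_self, Matrix.kroneckerMap_apply,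
        LinearMap.mk₂_apply, Finsupp.single_apply, eq_comm]
  have hdetG : G.det = (1/2 : ℝ) ^ (2 * m) * (-1 : ℝ) ^ m := by
    have h1 : G.det = ((1/2 : ℝ) • ((1 : Matrix (Fin m) (Fin m) ℝ) ⊗ₖ !![(0:ℝ),1;1,0])).det := by
      rw [← hGval, Matrix.det_reindex_self]
    rw [h1, Matrix.det_smul, Matrix.det_kronecker]
    have hd2 : (!![(0:ℝ),1;1,0]).det = -1 := by simp [Matrix.det_fin_two_of]
    simp [hd2, Fintype.card_prod]
    ring
  have hdetGne : G.det ≠ 0 := by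
    rw [hdetG]
    exact mul_ne_zero (pow_ne_zero _ (by norm_num)) (pow_ne_zero _ (by norm_num))
  have hdetJMne : JM.det ≠ 0 := by
    have hsq : JM.det * JM.det = 1 := by
      have h := congrArg Matrix.det hJM2
      rwa [Matrix.det_mul, Matrix.det_neg, Matrix.det_one, hcard, mul_one,
        (even_two_mul m).neg_one_pow] at h
    intro h; rw [h] at hsq; simp at hsq
  have hΩskew : Ωᵀ = -Ω := by
    ext i j
    simp only [Matrix.transpose_apply, Matrix.neg_apply, hΩdef, BilinForm.toMatrix_apply,
      LinearMap.BilinForm.compRight_apply]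
    exact hskew _ _
  have hJMeig : ∀ t : ℝ, (t • (1 : Matrix (Fin m ⊕ Fin m) (Fin m ⊕ Fin m) ℝ) - JM).det ≠ 0 := by
    intro t hdet
    obtain ⟨v, hv, hv0⟩ := (Matrix.exists_mulVec_eq_zero_iff).mpr hdet
    have hmv : JM *ᵥ v = t • v := by
      rw [Matrix.sub_mulVec, Matrix.smul_mulVec, Matrix.one_mulVec, sub_eq_zero] at hv0
      exact hv0.symm
    have h2 : JM *ᵥ (JM *ᵥ v) = (t * t) • v := by
      rw [hmv, Matrix.mulVec_smul, hmv, smul_smul]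
    have h3 : JM *ᵥ (JM *ᵥ v) = -v := by
      rw [Matrix.mulVec_mulVec, hJM2, Matrix.neg_mulVec, Matrix.one_mulVec]
    obtain ⟨i, hi⟩ := Function.ne_iff.mp hv
    have h4 := congrFun (h2.symm.trans h3) i
    simp only [Pi.smul_apply, smul_eq_mul, Pi.neg_apply] at h4
    have h5 : (t * t + 1) * v i = 0 := by linarith
    rcases mul_eq_zero.mp h5 with h6 | h6
    · nlinarith
    · exact hi (by simpa using h6)
  have hΩeig : ∀ t : ℝ, (t • (1 : Matrix (Fin m ⊕ Fin m) (Fin m ⊕ Fin m) ℝ) - Ω).det ≠ 0 := by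
    intro t hdet
    obtain ⟨v, hv, hv0⟩ := (Matrix.exists_mulVec_eq_zero_iff).mpr hdet
    have hmv : Ω *ᵥ v = t • v := by
      rw [Matrix.sub_mulVec, Matrix.smul_mulVec, Matrix.one_mulVec, sub_eq_zero] at hv0
      exact hv0.symm
    have hzero : v ⬝ᵥ (Ω *ᵥ v) = 0 := by
      have h1 : v ⬝ᵥ (Ω *ᵥ v) = - (v ⬝ᵥ (Ω *ᵥ v)) := by
        conv_lhs => rw [Matrix.dotProduct_mulVec, ← Matrix.mulVec_transpose, hΩskew,
          Matrix.neg_mulVec]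
        rw [neg_dotProduct, dotProduct_comm]
      linarith
    have ht : t * (v ⬝ᵥ v) = 0 := by
      rw [hmv, dotProduct_smul, smul_eq_mul] at hzero
      exact hzero
    have hvv : v ⬝ᵥ v ≠ 0 := fun h => hv (dotProduct_self_eq_zero.mp h)
    have ht0 : t = 0 := by
      rcases mul_eq_zero.mp ht with h | h
      · exact h
      · exact absurd h hvv
    rw [ht0] at hdet
    simp only [zero_smul, zero_sub, Matrix.det_neg, hcard, Matrix.det_one] at hdet
    rw [(even_two_mul m).neg_one_pow] at hdet
    have : Ω.det = G.det * JM.det := by rw [hΩeq, Matrix.det_mul]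
    rw [one_mul, this] at hdet
    exact (mul_ne_zero hdetGne hdetJMne) hdet
  have hJMpos : 0 < JM.det := detPosAux JM hceven hcpos hJMeig
  have hΩpos : 0 < Ω.det := detPosAux Ω hceven hcpos hΩeig
  have hGpos : 0 < G.det := by
    have hΩdet : Ω.det = G.det * JM.det := by rw [hΩeq, Matrix.det_mul]
    nlinarith [hΩpos, hJMpos, hΩdet]
  rw [hdetG] at hGpos
  by_contra hodd
  rw [Nat.not_even_iff_odd] at hodd
  rw [hodd.neg_one_pow] at hGpos
  have hp : (0:ℝ) < (1/2 : ℝ) ^ (2 * m) := by positivity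
  nlinarith
end

section
/- Let J : W → W be ℝ-linear with J∘J = −id_W and ⟨Jx, Jy⟩ = ⟨x, y⟩ for all x, y ∈ W. Then there exists a subspace C⁺ ⊆ W with J(C⁺) = C⁺ such that the canonical pairing is positive definite on C⁺ and negative definite on the orthogonal complement C⁻ = (C⁺)^⊥ (which is also J-invariant), W = C⁺ ⊕ C⁻, and the restrictions of the projection π_V : W → V to C⁺ and to C⁻ are both isomorphisms onto V. -/
open Module

open RealInnerProductSpace

section AuxInner

variable {E : Type*} [AddCommGroup E] [Module ℝ E] [FiniteDimensional ℝ E]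

/-- An auxiliary positive definite inner product coming from a choice of basis. -/
noncomputable def inner0 (x y : E) : ℝ :=
  ∑ i, (Module.finBasis ℝ E).repr x i * (Module.finBasis ℝ E).repr y i

lemma inner0_comm (x y : E) : inner0 x y = inner0 y x := by
  simp [inner0, mul_comm]

lemma inner0_add_left (x y z : E) : inner0 (x + y) z = inner0 x z + inner0 y z := by
  simp [inner0, add_mul, Finset.sum_add_distrib]

lemma inner0_smul_left (c : ℝ) (x y : E) : inner0 (c • x) y = c * inner0 x y := by
  simp [inner0, Finset.mul_sum, mul_assoc]

lemma inner0_neg_neg (x y : E) : inner0 (-x) (-y) = inner0 x y := by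
  simp [inner0]

lemma inner0_nonneg (x : E) : 0 ≤ inner0 x x :=
  Finset.sum_nonneg fun i _ => mul_self_nonneg _

lemma inner0_definite (x : E) (h : inner0 x x = 0) : x = 0 := by
  have h1 := (Finset.sum_eq_zero_iff_of_nonneg
    (fun (i : Fin (finrank ℝ E)) _ => mul_self_nonneg ((Module.finBasis ℝ E).repr x i))).mp h
  have h2 : (Module.finBasis ℝ E).repr x = 0 := by
    ext i
    simpa [mul_self_eq_zero] using h1 i (Finset.mem_univ i)
  have := congrArg (Module.finBasis ℝ E).repr.symm h2
  simpa using this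

/-- A `J`-invariant positive definite inner product. -/
noncomputable def coreJ (J : E →ₗ[ℝ] E) : InnerProductSpace.Core ℝ E where
  inner x y := inner0 x y + inner0 (J x) (J y)
  conj_inner_symm x y := by
    simp only [starRingEnd_apply, star_trivial]
    rw [inner0_comm x y, inner0_comm (J x) (J y)]
  re_inner_nonneg x := by
    simpa using add_nonneg (inner0_nonneg x) (inner0_nonneg (J x))
  add_left x y z := by
    simp only [map_add, inner0_add_left]; ring
  smul_left x y r := by
    simp only [map_smul, inner0_smul_left, starRingEnd_apply, star_trivial]; ring
  definite x h := by
    have h1 := inner0_nonneg x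
    have h2 := inner0_nonneg (J x)
    have : inner0 x x = 0 := by change inner0 x x + inner0 (J x) (J x) = 0 at h; linarith
    exact inner0_definite x this

end AuxInner


theorem aux_spectral {E : Type*} [NormedAddCommGroup E] [InnerProductSpace ℝ E]
    [FiniteDimensional ℝ E]
    (B : LinearMap.BilinForm ℝ E) (hBsymm : ∀ x y, B x y = B y x)
    (hBnd : ∀ x : E, (∀ y, B x y = 0) → x = 0)
    (J : E →ₗ[ℝ] E) (hJ2 : ∀ x, J (J x) = -x)
    (hJB : ∀ x y, B (J x) (J y) = B x y)
    (hJi : ∀ x y : E, ⟪J x, J y⟫ = ⟪x, y⟫) :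
    ∃ Cp Cn : Submodule ℝ E,
      Submodule.map J Cp = Cp ∧ Submodule.map J Cn = Cn ∧
      (∀ x ∈ Cp, x ≠ 0 → 0 < B x x) ∧
      (∀ x ∈ Cn, x ≠ 0 → B x x < 0) ∧
      IsCompl Cp Cn ∧
      (∀ y, y ∈ Cn ↔ ∀ x ∈ Cp, B x y = 0) := by
  classical
  -- the operator `A` representing `B` with respect to the inner product
  obtain ⟨A, hAB⟩ : ∃ A : E →ₗ[ℝ] E, ∀ x y, ⟪A x, y⟫ = B x y := by
    let Φ : E →ₗ[ℝ] (E →ₗ[ℝ] ℝ) := LinearMap.mk₂ ℝ (fun x y => ⟪x, y⟫)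
      (fun x y z => inner_add_left x y z)
      (fun c x y => (real_inner_smul_left x y c).trans (smul_eq_mul ..).symm)
      (fun x y z => inner_add_right x y z)
      (fun c x y => (real_inner_smul_right x y c).trans (smul_eq_mul ..).symm)
    have hΦapp : ∀ x y, Φ x y = ⟪x, y⟫ := fun x y => rfl
    have hΦ : Function.Injective Φ := by
      rw [injective_iff_map_eq_zero]
      intro x hx
      have : ⟪x, x⟫ = 0 := by rw [← hΦapp, hx]; rfl
      exact inner_self_eq_zero.mp this
    have hdim : finrank ℝ E = finrank ℝ (E →ₗ[ℝ] ℝ) :=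
      (Subspace.dual_finrank_eq (K := ℝ) (V := E)).symm
    let e := LinearMap.linearEquivOfInjective Φ hΦ hdim
    have he : ∀ x, e x = Φ x := fun x => rfl
    refine ⟨e.symm.toLinearMap ∘ₗ B, fun x y => ?_⟩
    have : ⟪e.symm (B x), y⟫ = Φ (e.symm (B x)) y := rfl
    rw [LinearMap.comp_apply]
    simp only [LinearEquiv.coe_coe]
    rw [this, ← he, e.apply_symm_apply]
  have hA : A.IsSymmetric := by
    intro x y
    rw [hAB, real_inner_comm, hAB, hBsymm]
  have hAinj : Function.Injective A := by
    rw [injective_iff_map_eq_zero]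
    intro x hx
    refine hBnd x fun y => ?_
    rw [← hAB, hx, inner_zero_left]
  have hcomm : ∀ x, A (J x) = J (A x) := by
    intro x
    refine ext_inner_right ℝ fun y => ?_
    have hy : J (-(J y)) = y := by rw [map_neg, hJ2, neg_neg]
    calc ⟪A (J x), y⟫ = B (J x) (J (-(J y))) := by rw [hAB, hy]
      _ = B x (-(J y)) := hJB _ _
      _ = -B x (J y) := by rw [map_neg]
      _ = -⟪A x, J y⟫ := by rw [hAB]
      _ = ⟪A x, -(J y)⟫ := (inner_neg_right _ _).symm
      _ = ⟪J (A x), J (-(J y))⟫ := (hJi _ _).symm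
      _ = ⟪J (A x), y⟫ := by rw [hy]
  -- spectral decomposition of `A`
  have hn' : finrank ℝ E = finrank ℝ E := rfl
  set n := finrank ℝ E with hn
  let b : OrthonormalBasis (Fin n) ℝ E := hA.eigenvectorBasis hn'
  let μ : Fin n → ℝ := hA.eigenvalues hn'
  have hAb : ∀ i, A (b i) = μ i • b i := fun i => by
    exact_mod_cast hA.apply_eigenvectorBasis hn' i
  have hbne : ∀ i, b i ≠ 0 := fun i => (hA.hasEigenvector_eigenvectorBasis hn' i).2
  have hμ0 : ∀ i, μ i ≠ 0 := by
    intro i h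
    refine hbne i (hAinj ?_)
    rw [hAb i, h, zero_smul, map_zero]
  have hcoef : ∀ (x : E) (i : Fin n), ⟪b i, A x⟫ = μ i * ⟪b i, x⟫ := fun x i => by
    rw [← hA (b i) x, hAb i, real_inner_smul_left]
  have hBexp : ∀ x y, B x y = ∑ i, μ i * (⟪b i, x⟫ * ⟪b i, y⟫) := by
    intro x y
    rw [← hAB, ← b.sum_inner_mul_inner (A x) y]
    refine Finset.sum_congr rfl fun i _ => ?_
    rw [real_inner_comm (b i) (A x), hcoef, mul_assoc]
  -- membership in spans of subfamilies of `b`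
  have hmem : ∀ (s : Set (Fin n)) (x : E),
      x ∈ Submodule.span ℝ (⇑b '' s) ↔ ∀ i ∉ s, ⟪b i, x⟫ = 0 := by
    intro s x
    constructor
    · intro hx i hi
      induction hx using Submodule.span_induction with
      | mem z hz =>
        obtain ⟨j, hj, rfl⟩ := hz
        exact b.orthonormal.2 (fun h => hi (h ▸ hj))
      | zero => exact inner_zero_right _
      | add u v hu hv hu' hv' => rw [inner_add_right, hu', hv', add_zero]
      | smul a u hu hu' => rw [real_inner_smul_right, hu', mul_zero]
    · intro h
      rw [← b.sum_repr' x]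
      refine Submodule.sum_mem _ fun i _ => ?_
      by_cases his : i ∈ s
      · exact Submodule.smul_mem _ _ (Submodule.subset_span ⟨i, his, rfl⟩)
      · rw [h i his, zero_smul]; exact Submodule.zero_mem _
  -- spans as sups of eigenspaces
  have hspan_eq : ∀ (s : Set (Fin n)) (pred : ℝ → Prop),
      (∀ i, i ∈ s ↔ pred (μ i)) → (∀ μ', pred μ' → ∀ i ∉ s, μ i ≠ μ') →
      Submodule.span ℝ (⇑b '' s)
        = ⨆ (μ' : ℝ) (_ : pred μ'), Module.End.eigenspace A μ' := by
    intro s pred h1 h2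
    refine le_antisymm (Submodule.span_le.mpr ?_) ?_
    · rintro z ⟨i, hi, rfl⟩
      have : b i ∈ Module.End.eigenspace A (μ i) :=
        Module.End.mem_eigenspace_iff.mpr (hAb i)
      exact Submodule.mem_iSup_of_mem (μ i) (Submodule.mem_iSup_of_mem ((h1 i).mp hi) this)
    · refine iSup_le fun μ' => iSup_le fun hμ' => ?_
      intro x hx
      rw [Module.End.mem_eigenspace_iff] at hx
      refine (hmem s x).mpr fun i hi => ?_
      have e1 : μ i * ⟪b i, x⟫ = μ' * ⟪b i, x⟫ := by
        rw [← hcoef, hx, real_inner_smul_right]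
      have e2 : (μ i - μ') * ⟪b i, x⟫ = 0 := by ring_nf; linarith [e1]
      rcases mul_eq_zero.mp e2 with h | h
      · exact absurd (by linarith : μ i = μ') (h2 μ' hμ' i hi)
      · exact h
  -- J-invariance of sups of eigenspaces
  have hJinv : ∀ (pred : ℝ → Prop),
      Submodule.map J (⨆ (μ' : ℝ) (_ : pred μ'), Module.End.eigenspace A μ')
        = ⨆ (μ' : ℝ) (_ : pred μ'), Module.End.eigenspace A μ' := by
    intro pred
    have h1 : Submodule.map J (⨆ (μ' : ℝ) (_ : pred μ'), Module.End.eigenspace A μ')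
        ≤ ⨆ (μ' : ℝ) (_ : pred μ'), Module.End.eigenspace A μ' := by
      rw [Submodule.map_iSup]
      refine iSup_le fun μ' => ?_
      rw [Submodule.map_iSup]
      refine iSup_le fun hμ' => ?_
      refine le_trans ?_ (le_iSup₂ (f := fun μ' (_ : pred μ') => Module.End.eigenspace A μ') μ' hμ')
      rintro z ⟨x, hx, rfl⟩
      have hx' : A x = μ' • x := Module.End.mem_eigenspace_iff.mp hx
      rw [Module.End.mem_eigenspace_iff, hcomm, hx', map_smul]
    refine le_antisymm h1 fun x hx => ?_
    refine ⟨-(J x), neg_mem (h1 ⟨x, hx, rfl⟩), ?_⟩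
    rw [map_neg, hJ2, neg_neg]
  -- the subspaces
  let P : Set (Fin n) := {i | 0 < μ i}
  have hPc : ∀ i, i ∈ Pᶜ ↔ μ i < 0 := fun i => by
    simp only [P, Set.mem_compl_iff, Set.mem_setOf_eq, not_lt]
    exact ⟨fun h => lt_of_le_of_ne h (hμ0 i), le_of_lt⟩
  refine ⟨Submodule.span ℝ (⇑b '' P), Submodule.span ℝ (⇑b '' Pᶜ), ?_, ?_, ?_, ?_, ?_, ?_⟩
  · rw [hspan_eq P (fun r => 0 < r) (fun i => Iff.rfl)
      (fun μ' h i hi => by simp only [P, Set.mem_setOf_eq, not_lt] at hi; intro hc; rw [hc] at hi; linarith)]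
    exact hJinv _
  · rw [hspan_eq Pᶜ (fun r => r < 0) hPc
      (fun μ' h i hi => by
        simp only [Set.notMem_compl_iff] at hi
        have : 0 < μ i := hi
        intro hc; rw [hc] at this; linarith)]
    exact hJinv _
  · -- positive definite on Cp
    intro x hx hx0
    rw [hBexp]
    have hc0 : ∀ i ∉ P, ⟪b i, x⟫ = 0 := (hmem P x).mp hx
    have hex : ∃ i, ⟪b i, x⟫ ≠ 0 := by
      by_contra h
      push_neg at h
      refine hx0 ?_
      rw [← b.sum_repr' x]
      exact Finset.sum_eq_zero fun i _ => by rw [h i, zero_smul]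
    obtain ⟨i₀, hi₀⟩ := hex
    have hi₀P : i₀ ∈ P := by
      by_contra h
      exact hi₀ (hc0 i₀ h)
    refine Finset.sum_pos' (fun i _ => ?_) ⟨i₀, Finset.mem_univ i₀, ?_⟩
    · by_cases hiP : i ∈ P
      · exact mul_nonneg (le_of_lt hiP) (mul_self_nonneg _)
      · rw [hc0 i hiP, mul_zero, mul_zero]
    · exact mul_pos hi₀P (mul_self_pos.mpr hi₀)
  · -- negative definite on Cn
    intro x hx hx0
    have hc0 : ∀ i ∉ Pᶜ, ⟪b i, x⟫ = 0 := (hmem Pᶜ x).mp hx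
    have hex : ∃ i, ⟪b i, x⟫ ≠ 0 := by
      by_contra h
      push_neg at h
      refine hx0 ?_
      rw [← b.sum_repr' x]
      exact Finset.sum_eq_zero fun i _ => by rw [h i, zero_smul]
    obtain ⟨i₀, hi₀⟩ := hex
    have hi₀P : i₀ ∈ Pᶜ := by
      by_contra h
      exact hi₀ (hc0 i₀ h)
    have hpos : 0 < ∑ i, -(μ i * (⟪b i, x⟫ * ⟪b i, x⟫)) := by
      refine Finset.sum_pos' (fun i _ => ?_) ⟨i₀, Finset.mem_univ i₀, ?_⟩
      · by_cases hiP : i ∈ Pᶜ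
        · have := (hPc i).mp hiP
          have h2 := mul_self_nonneg (⟪b i, x⟫)
          nlinarith
        · rw [hc0 i hiP, mul_zero, mul_zero, neg_zero]
      · have := (hPc i₀).mp hi₀P
        have h2 := mul_self_pos.mpr hi₀
        nlinarith
    have h' : (0:ℝ) < -∑ i, μ i * (⟪b i, x⟫ * ⟪b i, x⟫) := by
      rw [← Finset.sum_neg_distrib]; exact hpos
    rw [hBexp]
    linarith
  · -- IsCompl
    constructor
    · rw [Submodule.disjoint_def]
      intro x hx1 hx2
      rw [← b.sum_repr' x]
      refine Finset.sum_eq_zero fun i _ => ?_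
      by_cases hiP : i ∈ P
      · rw [(hmem Pᶜ x).mp hx2 i (by simpa using hiP), zero_smul]
      · rw [(hmem P x).mp hx1 i hiP, zero_smul]
    · rw [codisjoint_iff, ← Submodule.span_union, ← Set.image_union, Set.union_compl_self,
        Set.image_univ]
      have : Set.range ⇑b = Set.range ⇑b.toBasis := by rw [b.coe_toBasis]
      rw [this, b.toBasis.span_eq]
  · -- orthogonality
    intro y
    constructor
    · intro hy x hx
      rw [hBexp]
      refine Finset.sum_eq_zero fun i _ => ?_
      by_cases hiP : i ∈ P
      · rw [(hmem Pᶜ y).mp hy i (by simpa using hiP), mul_zero, mul_zero]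
      · rw [(hmem P x).mp hx i hiP, zero_mul, mul_zero]
    · intro h
      refine (hmem Pᶜ y).mpr fun i hi => ?_
      have hiP : i ∈ P := by simpa using hi
      have hBi : B (b i) y = 0 := h (b i) (Submodule.subset_span ⟨i, hiP, rfl⟩)
      rw [← hAB, hAb i, real_inner_smul_left] at hBi
      exact (mul_eq_zero.mp hBi).resolve_left (hμ0 i)

/-- An orthogonal complex structure `J` on `W` admits a `J`-invariant positive definite
subspace `C⁺` whose orthogonal complement `C⁻` is `J`-invariant and negative definite,
with `W = C⁺ ⊕ C⁻`, and the projection `π_V` restricts to isomorphisms `C⁺ ≅ V ≅ C⁻`. -/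
theorem orthogonal_complex_structure_reduction
    {V : Type*} [AddCommGroup V] [Module ℝ V] [FiniteDimensional ℝ V]
    (J : (V × Module.Dual ℝ V) →ₗ[ℝ] V × Module.Dual ℝ V)
    (hJ2 : J ∘ₗ J = -LinearMap.id)
    (horth : ∀ x y, pairB V (J x) (J y) = pairB V x y) :
    ∃ Cp : Submodule ℝ (V × Module.Dual ℝ V),
      Submodule.map J Cp = Cp ∧
      (∀ x ∈ Cp, x ≠ 0 → 0 < pairB V x x) ∧
      (∀ x ∈ (pairB V).orthogonal Cp, x ≠ 0 → pairB V x x < 0) ∧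
      Submodule.map J ((pairB V).orthogonal Cp) = (pairB V).orthogonal Cp ∧
      IsCompl Cp ((pairB V).orthogonal Cp) ∧
      Function.Bijective (LinearMap.fst ℝ V (Module.Dual ℝ V) ∘ₗ Cp.subtype) ∧
      Function.Bijective
        (LinearMap.fst ℝ V (Module.Dual ℝ V) ∘ₗ ((pairB V).orthogonal Cp).subtype) := by
  classical
  have hJ2' : ∀ x, J (J x) = -x := by
    intro x
    have := DFunLike.congr_fun hJ2 x
    simpa using this
  have hpair : ∀ x y : V × Module.Dual ℝ V, pairB V x y = 1/2 * (x.2 y.1 + y.2 x.1) :=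
    fun x y => rfl
  have hsymm : ∀ x y, pairB V x y = pairB V y x := fun x y => by
    rw [hpair, hpair]; ring
  have hnd : ∀ x : V × Module.Dual ℝ V, (∀ y, pairB V x y = 0) → x = 0 := by
    intro x hx
    have h1 : x.2 = 0 := by
      ext w
      have := hx (w, 0)
      rw [hpair] at this
      simpa using this
    have h2 : x.1 = 0 := by
      rw [← Module.forall_dual_apply_eq_zero_iff (R := ℝ)]
      intro φ
      have := hx (0, φ)
      rw [hpair] at this
      simpa using this
    exact Prod.ext h2 h1
  have hfd : FiniteDimensional ℝ (V × Module.Dual ℝ V) := inferInstance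
  have hfinW : finrank ℝ (V × Module.Dual ℝ V) = 2 * finrank ℝ V := by
    rw [Module.finrank_prod, Subspace.dual_finrank_eq]; ring
  letI c : InnerProductSpace.Core ℝ (V × Module.Dual ℝ V) := coreJ J
  letI : NormedAddCommGroup (V × Module.Dual ℝ V) := c.toNormedAddCommGroup
  letI : InnerProductSpace ℝ (V × Module.Dual ℝ V) := InnerProductSpace.ofCore c.1
  letI : FiniteDimensional ℝ (V × Module.Dual ℝ V) := hfd
  have hJi : ∀ x y : V × Module.Dual ℝ V, ⟪J x, J y⟫ = ⟪x, y⟫ := by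
    intro x y
    show inner0 (J x) (J y) + inner0 (J (J x)) (J (J y))
        = inner0 x y + inner0 (J x) (J y)
    rw [hJ2' x, hJ2' y, inner0_neg_neg]
    ring
  obtain ⟨Cp, Cn, h1, h2, h3, h4, h5, h6⟩ :=
    aux_spectral (pairB V) hsymm hnd J hJ2' horth hJi
  have horthCn : (pairB V).orthogonal Cp = Cn := by
    ext y
    rw [LinearMap.BilinForm.mem_orthogonal_iff, h6 y]
  have hinj : ∀ (Q : Submodule ℝ (V × Module.Dual ℝ V)),
      (∀ x ∈ Q, x ≠ 0 → pairB V x x ≠ 0) →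
      Function.Injective (LinearMap.fst ℝ V (Module.Dual ℝ V) ∘ₗ Q.subtype) := by
    intro Q hQ
    rw [injective_iff_map_eq_zero]
    intro x hx
    have hx1 : (x : V × Module.Dual ℝ V).1 = 0 := hx
    by_contra hne
    have hxne : (x : V × Module.Dual ℝ V) ≠ 0 := fun h0 => hne (Subtype.ext h0)
    refine hQ x x.2 hxne ?_
    rw [hpair, hx1]
    simp
  have hinjp := hinj Cp (fun x hx hne => ne_of_gt (h3 x hx hne))
  have hinjn := hinj Cn (fun x hx hne => ne_of_lt (h4 x hx hne))
  have hrank : finrank ℝ Cp + finrank ℝ Cn = 2 * finrank ℝ V := by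
    rw [Submodule.finrank_add_eq_of_isCompl h5, hfinW]
  have hlep : finrank ℝ Cp ≤ finrank ℝ V :=
    LinearMap.finrank_le_finrank_of_injective hinjp
  have hlen : finrank ℝ Cn ≤ finrank ℝ V :=
    LinearMap.finrank_le_finrank_of_injective hinjn
  have hpk : finrank ℝ Cp = finrank ℝ V := by omega
  have hnk : finrank ℝ Cn = finrank ℝ V := by omega
  have hsurj : ∀ (Q : Submodule ℝ (V × Module.Dual ℝ V)),
      finrank ℝ Q = finrank ℝ V →
      Function.Injective (LinearMap.fst ℝ V (Module.Dual ℝ V) ∘ₗ Q.subtype) →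
      Function.Surjective (LinearMap.fst ℝ V (Module.Dual ℝ V) ∘ₗ Q.subtype) := by
    intro Q hq hi
    have : LinearMap.range (LinearMap.fst ℝ V (Module.Dual ℝ V) ∘ₗ Q.subtype) = ⊤ := by
      apply Submodule.eq_top_of_finrank_eq
      rw [LinearMap.finrank_range_of_inj hi, hq]
    exact LinearMap.range_eq_top.mp this
  refine ⟨Cp, h1, h3, ?_, ?_, ?_, ⟨hinjp, hsurj Cp hpk hinjp⟩, ?_⟩
  · rw [horthCn]; exact h4
  · rw [horthCn]; exact h2
  · rw [horthCn]; exact h5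
  · rw [horthCn]; exact ⟨hinjn, hsurj Cn hnk hinjn⟩
end

section
/- Let I : V → V be ℝ-linear with I∘I = −id_V, and let ω : V → V* be a linear isomorphism which is skew (ω(X)(Y) = −ω(Y)(X) for all X, Y ∈ V) and satisfies ω∘I = I*∘ω, where I* : V* → V* is the dual map. Define J_I : W → W by J_I(X+ξ) = −I(X) + I*(ξ) and J_ω : W → W by J_ω(X+ξ) = −ω⁻¹(ξ) + ω(X). Then J_I and J_ω are orthogonal for the canonical pairing, satisfy J_I² = J_ω² = −id_W, and anticommute: J_I∘J_ω = −J_ω∘J_I; consequently, for every t ∈ ℝ the map J_t = (sin t)·J_I + (cos t)·J_ω satisfies J_t∘J_t = −id_W and is orthogonal for the canonical pairing. -/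
open Module

/-- The diagonal generalized complex structure `J_I(X+ξ) = −I(X) + I*(ξ)` of a complex
structure `I` on `V`. -/
noncomputable def JofI {V : Type*} [AddCommGroup V] [Module ℝ V] (I : V →ₗ[ℝ] V) :
    (V × Module.Dual ℝ V) →ₗ[ℝ] V × Module.Dual ℝ V :=
  LinearMap.prodMap (-I) I.dualMap

/-- The anti-diagonal generalized complex structure `J_ω(X+ξ) = −ω⁻¹(ξ) + ω(X)` of a
symplectic structure `ω : V ≅ V*`. -/
noncomputable def Jofω {V : Type*} [AddCommGroup V] [Module ℝ V]
    (ω : V ≃ₗ[ℝ] Module.Dual ℝ V) :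
    (V × Module.Dual ℝ V) →ₗ[ℝ] V × Module.Dual ℝ V :=
  LinearMap.prod (-(ω.symm.toLinearMap ∘ₗ LinearMap.snd ℝ V (Module.Dual ℝ V)))
    (ω.toLinearMap ∘ₗ LinearMap.fst ℝ V (Module.Dual ℝ V))

/-- For a complex structure `I` and a compatible holomorphic-symplectic-type form `ω`,
the structures `J_I` and `J_ω` are orthogonal complex structures on `W` which
anticommute; consequently `J_t = (sin t)·J_I + (cos t)·J_ω` is an orthogonal complex
structure on `W` for every `t ∈ ℝ`. -/
theorem interpolation_family
    {V : Type*} [AddCommGroup V] [Module ℝ V] [FiniteDimensional ℝ V]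
    (I : V →ₗ[ℝ] V) (hI : I ∘ₗ I = -LinearMap.id)
    (ω : V ≃ₗ[ℝ] Module.Dual ℝ V)
    (hskew : ∀ X Y : V, ω X Y = -(ω Y X))
    (hcompat : ∀ X : V, ω (I X) = I.dualMap (ω X)) :
    (∀ x y, pairB V (JofI I x) (JofI I y) = pairB V x y) ∧
    (∀ x y, pairB V (Jofω ω x) (Jofω ω y) = pairB V x y) ∧
    JofI I ∘ₗ JofI I = -LinearMap.id ∧
    Jofω ω ∘ₗ Jofω ω = -LinearMap.id ∧
    JofI I ∘ₗ Jofω ω = -(Jofω ω ∘ₗ JofI I) ∧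
    ∀ t : ℝ,
      (Real.sin t • JofI I + Real.cos t • Jofω ω)
          ∘ₗ (Real.sin t • JofI I + Real.cos t • Jofω ω) = -LinearMap.id ∧
      ∀ x y, pairB V ((Real.sin t • JofI I + Real.cos t • Jofω ω) x)
          ((Real.sin t • JofI I + Real.cos t • Jofω ω) y) = pairB V x y := by

  -- pointwise consequences of the hypotheses
  have hI' : ∀ X : V, I (I X) = -X := by
    intro X
    have := congrFun (congrArg DFunLike.coe hI) X
    simpa using this
  have hcompat' : ∀ ξ : Module.Dual ℝ V, I (ω.symm ξ) = ω.symm (I.dualMap ξ) := by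
    intro ξ
    apply ω.injective
    rw [hcompat, ω.apply_symm_apply, ω.apply_symm_apply]
  -- the five basic facts
  have h1 : ∀ x y, pairB V (JofI I x) (JofI I y) = pairB V x y := by
    intro x y
    simp [pairB, JofI, hI']
  have h2 : ∀ x y, pairB V (Jofω ω x) (Jofω ω y) = pairB V x y := by
    intro x y
    have e1 : ω x.1 (ω.symm y.2) = -(y.2 x.1) := by
      rw [hskew x.1 (ω.symm y.2), ω.apply_symm_apply]
    have e2 : ω y.1 (ω.symm x.2) = -(x.2 y.1) := by
      rw [hskew y.1 (ω.symm x.2), ω.apply_symm_apply]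
    simp [pairB, Jofω, e1, e2]
    ring
  have h3 : JofI I ∘ₗ JofI I = -LinearMap.id := by
    apply LinearMap.ext; intro x
    refine Prod.ext ?_ ?_
    · simp [JofI, hI']
    · ext Y; simp [JofI, hI']
  have h4 : Jofω ω ∘ₗ Jofω ω = -LinearMap.id := by
    apply LinearMap.ext; intro x
    simp [Jofω, Prod.ext_iff]
  have h5 : JofI I ∘ₗ Jofω ω = -(Jofω ω ∘ₗ JofI I) := by
    apply LinearMap.ext; intro x
    simp [JofI, Jofω, Prod.ext_iff, hcompat, hcompat']
  refine ⟨h1, h2, h3, h4, h5, fun t => ?_⟩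
  set a := Real.sin t
  set b := Real.cos t
  have hab : a * a + b * b = 1 := by
    have := Real.sin_sq_add_cos_sq t
    nlinarith [this]
  have hJJ : ∀ x, JofI I (JofI I x) = -x := by
    intro x
    have := congrFun (congrArg DFunLike.coe h3) x
    simpa using this
  have hKK : ∀ x, Jofω ω (Jofω ω x) = -x := by
    intro x
    have := congrFun (congrArg DFunLike.coe h4) x
    simpa using this
  have hJK : ∀ x, JofI I (Jofω ω x) = -(Jofω ω (JofI I x)) := by
    intro x
    have := congrFun (congrArg DFunLike.coe h5) x
    simpa using this
  constructor
  · apply LinearMap.ext; intro x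
    simp only [LinearMap.comp_apply, LinearMap.add_apply, LinearMap.smul_apply,
      map_add, map_smul, hJJ, hKK, hJK, LinearMap.neg_apply, LinearMap.id_apply]
    match_scalars <;> nlinarith [hab]
  · intro x y
    have hcJK : ∀ u v, pairB V (JofI I u) (Jofω ω v) = pairB V u (Jofω ω (JofI I v)) := by
      intro u v
      calc pairB V (JofI I u) (Jofω ω v)
          = pairB V (JofI I (JofI I u)) (JofI I (Jofω ω v)) := (h1 _ _).symm
        _ = pairB V (-u) (-(Jofω ω (JofI I v))) := by rw [hJJ, hJK]
        _ = pairB V u (Jofω ω (JofI I v)) := by simp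
    have hcKJ : ∀ u v, pairB V (Jofω ω u) (JofI I v) = -pairB V u (Jofω ω (JofI I v)) := by
      intro u v
      calc pairB V (Jofω ω u) (JofI I v)
          = pairB V (Jofω ω (Jofω ω u)) (Jofω ω (JofI I v)) := (h2 _ _).symm
        _ = pairB V (-u) (Jofω ω (JofI I v)) := by rw [hKK]
        _ = -pairB V u (Jofω ω (JofI I v)) := by simp
    simp only [LinearMap.add_apply, LinearMap.smul_apply, map_add, map_smul,
      LinearMap.add_apply, LinearMap.smul_apply, smul_eq_mul]
    rw [h1, h2, hcJK, hcKJ]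
    linear_combination (pairB V x y) * hab
end
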